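/- Combining the unbiasedness and variance bound of the ARRFull estimator with independent Laplace noise: if f̂(G) = (1/(μ(1−ρ)))·Σᵢ(wᵢ + Lᵢ) where Lᵢ are i.i.d. Laplace random variables with scale d_max/ε₂, independent of everything else, then E[(f̂(G) − f_△(G))²] ≤ (2C₄(G) + S₂(G))/(μ(1−ρ)²) + 2n·d_max²/(μ²(1−ρ)²·ε₂²). -/

import Mathlib

open MeasureTheory ProbabilityTheory Real

/-- Expected `l₂` loss of the `ARRFull` estimator with Laplace noise.
`W = Σᵢ wᵢ` is the noiseless statistic (unbiased up to the scaling factor,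
with the stated variance bound), and `L i` are the independent Laplace noises
with scale `d_max/ε₂` (mean `0`, variance `2(d_max/ε₂)²`), whose sum is
independent of `W`. -/
theorem arrfull_l2_loss_le
    {Ω : Type*} [MeasurableSpace Ω] (P : Measure Ω) [IsProbabilityMeasure P]
    (n : ℕ) (W : Ω → ℝ) (L : Fin n → Ω → ℝ)
    (f C4 S2 dmax : ℝ) (μ ρ ε₁ ε₂ : ℝ)
    (hε₁ : 0 < ε₁) (hρ : ρ = Real.exp (-ε₁)) (hμ0 : 0 < μ) (hμ1 : μ < 1)
    (hε₂ : 0 < ε₂) (hC4 : 0 ≤ C4) (hS2 : 0 ≤ S2) (hdmax : 0 ≤ dmax)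
    (hW2 : MemLp W 2 P) (hL2 : MemLp (fun ω => ∑ i : Fin n, L i ω) 2 P)
    (hWmean : ∫ ω, W ω ∂P = μ * (1 - ρ) * f)
    (hWvar : variance W P ≤ μ * (2 * C4 + S2))
    (hLmean : ∫ ω, (∑ i : Fin n, L i ω) ∂P = 0)
    (hLvar : variance (fun ω => ∑ i : Fin n, L i ω) P
      = 2 * n * (dmax / ε₂) ^ 2)
    (hindep : IndepFun W (fun ω => ∑ i : Fin n, L i ω) P) :
    (∫ ω, ((1 / (μ * (1 - ρ))) * (W ω + ∑ i : Fin n, L i ω) - f) ^ 2 ∂P)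
      ≤ (2 * C4 + S2) / (μ * (1 - ρ) ^ 2)
        + 2 * n * dmax ^ 2 / (μ ^ 2 * (1 - ρ) ^ 2 * ε₂ ^ 2) := by
  set S : Ω → ℝ := fun ω => ∑ i : Fin n, L i ω with hS
  have hρ1 : ρ < 1 := by
    rw [hρ]; calc Real.exp (-ε₁) < Real.exp 0 := Real.exp_lt_exp.2 (by linarith)
      _ = 1 := Real.exp_zero
  have hc : 0 < μ * (1 - ρ) := mul_pos hμ0 (by linarith)
  set c : ℝ := μ * (1 - ρ) with hcdef
  have hX2 : MemLp (fun ω => W ω + S ω) 2 P := hW2.add hL2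
  have hXint : Integrable (fun ω => W ω + S ω) P :=
    hX2.integrable (by norm_num)
  have hEX : ∫ ω, (W ω + S ω) ∂P = c * f := by
    rw [integral_add (hW2.integrable (by norm_num)) (hL2.integrable (by norm_num)),
      hWmean, hLmean, add_zero]
  have hvarX : variance (fun ω => W ω + S ω) P
      = variance W P + variance S P := hindep.variance_add hW2 hL2
  have hkey : (∫ ω, ((1 / c) * (W ω + S ω) - f) ^ 2 ∂P)
      = (1 / c) ^ 2 * variance (fun ω => W ω + S ω) P := by
    rw [variance_eq_integral hX2.aemeasurable, ← integral_const_mul]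
    congr 1 with ω
    rw [hEX]
    have : (fun ω => W ω + S ω) ω = W ω + S ω := rfl
    field_simp
  rw [hkey, hvarX, hLvar]
  have hrhs : (2 * C4 + S2) / (μ * (1 - ρ) ^ 2)
        + 2 * n * dmax ^ 2 / (μ ^ 2 * (1 - ρ) ^ 2 * ε₂ ^ 2)
      = (1 / c) ^ 2 * (μ * (2 * C4 + S2) + 2 * n * (dmax / ε₂) ^ 2) := by
    rw [hcdef]
    have h1 : (1 : ℝ) - ρ ≠ 0 := by linarith
    have h2 : μ ≠ 0 := hμ0.ne'
    have h3 : ε₂ ≠ 0 := hε₂.ne'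
    field_simp
  rw [hrhs]
  have : variance (fun ω => W ω + S ω) P - variance S P = variance W P := by
    rw [hvarX]; ring
  gcongr
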